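/- If the parallel trends and no-anticipation assumptions hold (so E[Y_it] = α_i + β_t + τ_it D_it), then the static two-way fixed effects OLS estimand can be written as τ^static = Σ_{it∈Ω₁} w_it^OLS τ_it with weights w_it^OLS = D̃_it / Σ_{jt∈Ω} D̃_jt² that do not depend on the outcome realizations, and these weights sum to one: Σ_{it∈Ω₁} w_it^OLS = 1. -/
import Mathlib


open Finset

/-- Under parallel trends and no anticipation (`E[Y_it] = α_i + β_t + τ_it D_it`),
the static TWFE OLS estimand is a weighted sum of treatment effects over
treated observations with weights `w_it = D̃_it / Σ D̃²` that do not depend on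
outcome realizations, and these weights sum to one.  Here `D̃` is the residual
of the treatment indicator from the projection on unit and period indicators:
it differs from `D` by an additive unit term plus period term, and is
orthogonal to all unit and period indicators over `Ω`. -/
theorem static_ols_weighted_sum {ι σ : Type*} [DecidableEq ι] [DecidableEq σ]
    (Ω : Finset (ι × σ)) (D : ι → σ → Bool)
    (Dind : ι → σ → ℝ) (hDind : ∀ i t, Dind i t = if D i t then 1 else 0)
    (α : ι → ℝ) (β : σ → ℝ) (τ : ι → σ → ℝ)
    (EY : ι → σ → ℝ) (hEY : ∀ i t, EY i t = α i + β t + τ i t * Dind i t)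
    (Dtil : ι → σ → ℝ)
    -- D̃ is D minus a two-way fixed effects fit:
    (a : ι → ℝ) (b : σ → ℝ)
    (hfit : ∀ p ∈ Ω, Dtil p.1 p.2 = Dind p.1 p.2 - a p.1 - b p.2)
    -- orthogonality to unit indicators:
    (horth_unit : ∀ i, ∑ p ∈ Ω.filter (fun p => p.1 = i), Dtil p.1 p.2 = 0)
    -- orthogonality to period indicators:
    (horth_per : ∀ t, ∑ p ∈ Ω.filter (fun p => p.2 = t), Dtil p.1 p.2 = 0)
    (hden : ∑ p ∈ Ω, (Dtil p.1 p.2) ^ 2 ≠ 0)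
    (τstatic : ℝ)
    (hτ : τstatic = (∑ p ∈ Ω, Dtil p.1 p.2 * EY p.1 p.2)
        / (∑ p ∈ Ω, (Dtil p.1 p.2) ^ 2))
    (w : ι → σ → ℝ)
    (hw : ∀ i t, w i t = Dtil i t / ∑ p ∈ Ω, (Dtil p.1 p.2) ^ 2) :
    τstatic = ∑ p ∈ Ω.filter (fun p => D p.1 p.2), w p.1 p.2 * τ p.1 p.2 ∧
      ∑ p ∈ Ω.filter (fun p => D p.1 p.2), w p.1 p.2 = 1 := by

  set S := ∑ p ∈ Ω, (Dtil p.1 p.2) ^ 2 with hS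
  -- orthogonality helpers
  have hA : ∀ g : ι → ℝ, ∑ p ∈ Ω, g p.1 * Dtil p.1 p.2 = 0 := by
    intro g
    rw [← Finset.sum_fiberwise_of_maps_to (g := Prod.fst) (t := Ω.image Prod.fst)
      (fun x hx => Finset.mem_image_of_mem _ hx)]
    refine Finset.sum_eq_zero fun i _ => ?_
    have : ∑ p ∈ Ω.filter (fun p => p.1 = i), g p.1 * Dtil p.1 p.2
        = g i * ∑ p ∈ Ω.filter (fun p => p.1 = i), Dtil p.1 p.2 := by
      rw [Finset.mul_sum]
      exact Finset.sum_congr rfl fun p hp => by rw [(Finset.mem_filter.1 hp).2]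
    rw [this, horth_unit i, mul_zero]
  have hB : ∀ g : σ → ℝ, ∑ p ∈ Ω, g p.2 * Dtil p.1 p.2 = 0 := by
    intro g
    rw [← Finset.sum_fiberwise_of_maps_to (g := Prod.snd) (t := Ω.image Prod.snd)
      (fun x hx => Finset.mem_image_of_mem _ hx)]
    refine Finset.sum_eq_zero fun t _ => ?_
    have : ∑ p ∈ Ω.filter (fun p => p.2 = t), g p.2 * Dtil p.1 p.2
        = g t * ∑ p ∈ Ω.filter (fun p => p.2 = t), Dtil p.1 p.2 := by
      rw [Finset.mul_sum]
      exact Finset.sum_congr rfl fun p hp => by rw [(Finset.mem_filter.1 hp).2]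
    rw [this, horth_per t, mul_zero]
  -- treated-sum trick
  have htreat : ∀ f : ι → σ → ℝ,
      ∑ p ∈ Ω.filter (fun p => D p.1 p.2), f p.1 p.2
        = ∑ p ∈ Ω, f p.1 p.2 * Dind p.1 p.2 := by
    intro f
    rw [Finset.sum_filter]
    refine Finset.sum_congr rfl fun p _ => ?_
    rw [hDind]
    by_cases h : D p.1 p.2 <;> simp [h]
  -- denominator equals sum of Dtil over treated
  have hDen : ∑ p ∈ Ω.filter (fun p => D p.1 p.2), Dtil p.1 p.2 = S := by
    rw [htreat]
    have : ∑ p ∈ Ω, Dtil p.1 p.2 * Dind p.1 p.2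
        = ∑ p ∈ Ω, ((Dtil p.1 p.2) ^ 2 + a p.1 * Dtil p.1 p.2 + b p.2 * Dtil p.1 p.2) := by
      refine Finset.sum_congr rfl fun p hp => ?_
      have h := hfit p hp
      have : Dind p.1 p.2 = Dtil p.1 p.2 + a p.1 + b p.2 := by linarith
      rw [this]; ring
    rw [this, Finset.sum_add_distrib, Finset.sum_add_distrib, hA a, hB b, add_zero, add_zero]
  -- numerator
  have hNum : ∑ p ∈ Ω, Dtil p.1 p.2 * EY p.1 p.2
      = ∑ p ∈ Ω.filter (fun p => D p.1 p.2), Dtil p.1 p.2 * τ p.1 p.2 := by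
    rw [htreat (fun i t => Dtil i t * τ i t)]
    have : ∑ p ∈ Ω, Dtil p.1 p.2 * EY p.1 p.2
        = ∑ p ∈ Ω, (α p.1 * Dtil p.1 p.2 + β p.2 * Dtil p.1 p.2
            + Dtil p.1 p.2 * τ p.1 p.2 * Dind p.1 p.2) := by
      refine Finset.sum_congr rfl fun p _ => ?_
      rw [hEY]; ring
    rw [this, Finset.sum_add_distrib, Finset.sum_add_distrib, hA α, hB β, add_zero, zero_add]
  constructor
  · rw [hτ, hNum, Finset.sum_div]
    refine Finset.sum_congr rfl fun p _ => ?_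
    rw [hw]
    field_simp
  · have : ∑ p ∈ Ω.filter (fun p => D p.1 p.2), w p.1 p.2
        = (∑ p ∈ Ω.filter (fun p => D p.1 p.2), Dtil p.1 p.2) / S := by
      rw [Finset.sum_div]
      exact Finset.sum_congr rfl fun p _ => hw p.1 p.2
    rw [this, hDen, div_self hden]
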